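/- Let s₂(n) denote the number of partitions of n into parts congruent to 2 or 4 modulo 6. For every integer n ≥ 0, s₂(n) + ∑_{j≥1} (−1)^j [ s₂(n − j(3j−1)) + s₂(n − j(3j+1)) ] equals (−1)^j if n = 6·j(3j−1)/2 for some integer j ∈ ℤ, and equals 0 otherwise; the sum is finite under the convention s₂(x) = 0 for x < 0. -/

import Mathlib

/-- `s2 n` is the number of partitions of `n` all of whose parts are congruent to
`2` or `4` modulo `6` (i.e. to `±2 (mod 6)`). -/
def s2 (n : ℕ) : ℕ :=
  (Finset.univ.filter fun P : Nat.Partition n => ∀ i ∈ P.parts, i % 6 = 2 ∨ i % 6 = 4).card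

/-- `s2Z` extends `s2` to `ℤ` by the convention `s2 x = 0` for `x < 0`. -/
def s2Z (x : ℤ) : ℤ := if 0 ≤ x then (s2 x.toNat : ℤ) else 0

namespace PNT12
open Finset
open scoped Classical

/-- signed count of sets of distinct positive parts satisfying `P` with sum `n` -/
def dset (P : ℕ → Prop) [DecidablePred P] (n : ℕ) : Finset (Finset ℕ) :=
  ((range (n+1)).powerset).filter fun t => (∀ i ∈ t, 0 < i ∧ P i) ∧ t.sum id = n

def E (P : ℕ → Prop) [DecidablePred P] (n : ℕ) : ℤ := ∑ t ∈ dset P n, (-1) ^ t.card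

theorem mem_dset {P : ℕ → Prop} [DecidablePred P] {n : ℕ} {t : Finset ℕ} :
    t ∈ dset P n ↔ (∀ i ∈ t, 0 < i ∧ P i) ∧ t.sum id = n := by
  constructor
  · intro h; exact (mem_filter.1 h).2
  · intro h
    refine mem_filter.2 ⟨mem_powerset.2 fun i hi => ?_, h⟩
    have : i ≤ t.sum id := Finset.single_le_sum (f := id) (fun _ _ => Nat.zero_le _) hi
    rw [h.2] at this
    exact mem_range.2 (Nat.lt_succ_of_le this)

/-- multisets of positive parts satisfying `P` with sum `n` -/
def mset (P : ℕ → Prop) [DecidablePred P] (n : ℕ) : Finset (Multiset ℕ) :=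
  ((univ : Finset (Nat.Partition n)).filter fun p => ∀ i ∈ p.parts, P i).image
    Nat.Partition.parts

theorem mem_mset {P : ℕ → Prop} [DecidablePred P] {n : ℕ} {M : Multiset ℕ} :
    M ∈ mset P n ↔ (∀ i ∈ M, 0 < i ∧ P i) ∧ M.sum = n := by
  unfold mset
  simp only [mem_image, mem_filter, mem_univ, true_and]
  constructor
  · rintro ⟨p, hp, rfl⟩
    exact ⟨fun i hi => ⟨p.parts_pos hi, hp i hi⟩, p.parts_sum⟩
  · rintro ⟨h1, h2⟩
    exact ⟨⟨M, fun {i} hi => (h1 i hi).1, h2⟩, fun i hi => (h1 i hi).2, rfl⟩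

theorem card_mset (P : ℕ → Prop) [DecidablePred P] (n : ℕ) :
    (mset P n).card = ((univ : Finset (Nat.Partition n)).filter fun p =>
      ∀ i ∈ p.parts, P i).card := by
  apply Finset.card_image_of_injOn
  intro p _ q _ h
  exact Nat.Partition.ext h


-- paste defs from p2 (will merge later)
def fmax (t : Finset ℕ) : ℕ := if h : t.Nonempty then t.max' h else 0
def fmin (t : Finset ℕ) : ℕ := if h : t.Nonempty then t.min' h else 0
def gapset (t : Finset ℕ) : Finset ℕ := (range (fmax t)).filter (· ∉ t)
def bgap (t : Finset ℕ) : ℕ := if h : (gapset t).Nonempty then (gapset t).max' h else 0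
def sig (t : Finset ℕ) : ℕ := fmax t - bgap t
def IsPent (t : Finset ℕ) : Prop := ∃ j : ℕ, t = Ico j (2*j) ∨ t = Ico (j+1) (2*j+1)
def fmap (t : Finset ℕ) : Finset ℕ :=
  if fmin t ≤ sig t then
    insert (fmax t + 1) ((t.erase (fmin t)).erase (fmax t - fmin t + 1))
  else
    insert (sig t) (insert (bgap t) (t.erase (fmax t)))

section facts
variable {t : Finset ℕ}

theorem fmax_eq {a : ℕ} (h1 : a ∈ t) (h2 : ∀ x ∈ t, x ≤ a) : fmax t = a := by
  unfold fmax
  rw [dif_pos ⟨a, h1⟩]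
  exact le_antisymm (Finset.max'_le _ _ _ h2) (Finset.le_max' _ _ h1)

theorem fmin_eq {a : ℕ} (h1 : a ∈ t) (h2 : ∀ x ∈ t, a ≤ x) : fmin t = a := by
  unfold fmin
  rw [dif_pos ⟨a, h1⟩]
  exact le_antisymm (Finset.min'_le _ _ h1) (Finset.le_min' _ _ _ h2)

theorem fmax_mem (h : t.Nonempty) : fmax t ∈ t := by
  unfold fmax; rw [dif_pos h]; exact t.max'_mem h

theorem fmin_mem (h : t.Nonempty) : fmin t ∈ t := by
  unfold fmin; rw [dif_pos h]; exact t.min'_mem h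

theorem le_fmax {x : ℕ} (h : x ∈ t) : x ≤ fmax t := by
  unfold fmax; rw [dif_pos ⟨x, h⟩]; exact Finset.le_max' _ _ h

theorem fmin_le {x : ℕ} (h : x ∈ t) : fmin t ≤ x := by
  unfold fmin; rw [dif_pos ⟨x, h⟩]; exact Finset.min'_le _ _ h

theorem gapset_nonempty (h : t.Nonempty) (hpos : ∀ i ∈ t, 0 < i) : (gapset t).Nonempty := by
  refine ⟨0, ?_⟩
  unfold gapset
  rw [mem_filter, mem_range]
  have hm := fmax_mem h
  exact ⟨hpos _ hm, fun h0 => absurd (hpos _ h0) (by simp)⟩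

theorem bgap_not_mem (h : t.Nonempty) (hpos : ∀ i ∈ t, 0 < i) : bgap t ∉ t := by
  unfold bgap
  rw [dif_pos (gapset_nonempty h hpos)]
  have := (gapset t).max'_mem (gapset_nonempty h hpos)
  unfold gapset at this
  exact (mem_filter.1 this).2

theorem bgap_lt (h : t.Nonempty) (hpos : ∀ i ∈ t, 0 < i) : bgap t < fmax t := by
  unfold bgap
  rw [dif_pos (gapset_nonempty h hpos)]
  have := (gapset t).max'_mem (gapset_nonempty h hpos)
  unfold gapset at this
  exact mem_range.1 (mem_filter.1 this).1

theorem mem_of_bgap_lt (h : t.Nonempty) (hpos : ∀ i ∈ t, 0 < i) {x : ℕ}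
    (h1 : bgap t < x) (h2 : x ≤ fmax t) : x ∈ t := by
  rcases eq_or_lt_of_le h2 with rfl | h2
  · exact fmax_mem h
  by_contra hx
  have hxg : x ∈ gapset t := by unfold gapset; rw [mem_filter, mem_range]; exact ⟨h2, hx⟩
  have : x ≤ bgap t := by
    unfold bgap
    rw [dif_pos (gapset_nonempty h hpos)]
    exact Finset.le_max' _ _ hxg
  omega

theorem bgap_eq {b : ℕ} (h : t.Nonempty) (hpos : ∀ i ∈ t, 0 < i)
    (h1 : b ∉ t) (h2 : b < fmax t) (h3 : ∀ x, b < x → x < fmax t → x ∈ t) : bgap t = b := by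
  have hne := gapset_nonempty h hpos
  have hbg : b ∈ gapset t := by unfold gapset; rw [mem_filter, mem_range]; exact ⟨h2, h1⟩
  have hle : b ≤ bgap t := by unfold bgap; rw [dif_pos hne]; exact Finset.le_max' _ _ hbg
  rcases eq_or_lt_of_le hle with h' | h'
  · omega
  · exact absurd (h3 _ h' (bgap_lt h hpos)) (bgap_not_mem h hpos)

theorem pent_struct (hp : IsPent t) (h : t.Nonempty) :
    t = Ico (fmin t) (fmax t + 1) ∧
      (fmax t + 1 = 2 * fmin t ∨ fmax t + 2 = 2 * fmin t) := by
  obtain ⟨j, hj | hj⟩ := hp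
  · have hj1 : 1 ≤ j := by
      rcases Nat.eq_zero_or_pos j with rfl | h1
      · rw [hj, Finset.nonempty_Ico] at h; omega
      · exact h1
    have hmin : fmin t = j := fmin_eq (by rw [hj]; rw [mem_Ico]; omega)
      (fun x hx => by rw [hj, mem_Ico] at hx; omega)
    have hmax : fmax t = 2*j - 1 := fmax_eq (by rw [hj, mem_Ico]; omega)
      (fun x hx => by rw [hj, mem_Ico] at hx; omega)
    constructor
    · rw [hmin, hmax, hj]
      congr 1
      omega
    · left; omega
  · have hj1 : 1 ≤ j := by
      rcases Nat.eq_zero_or_pos j with rfl | h1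
      · rw [hj, Finset.nonempty_Ico] at h; omega
      · exact h1
    have hmin : fmin t = j + 1 := fmin_eq (by rw [hj, mem_Ico]; omega)
      (fun x hx => by rw [hj, mem_Ico] at hx; omega)
    have hmax : fmax t = 2*j := fmax_eq (by rw [hj, mem_Ico]; omega)
      (fun x hx => by rw [hj, mem_Ico] at hx; omega)
    constructor
    · rw [hmin, hmax, hj]
    · right; omega


theorem caseA_spec (ht : t.Nonempty) (hpos : ∀ i ∈ t, 0 < i) (hnp : ¬ IsPent t)
    (hA : fmin t ≤ sig t) :
    (fmap t).Nonempty ∧ (∀ i ∈ fmap t, 0 < i) ∧ ¬ IsPent (fmap t) ∧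
      (fmap t).sum id = t.sum id ∧ (fmap t).card + 1 = t.card ∧ fmap (fmap t) = t := by
  set m := fmax t with hm
  set s := fmin t with hs
  set b := bgap t with hb
  have hmem_m : m ∈ t := fmax_mem ht
  have hmem_s : s ∈ t := fmin_mem ht
  have hspos : 0 < s := hpos _ hmem_s
  have hbnm : b ∉ t := bgap_not_mem ht hpos
  have hblt : b < m := bgap_lt ht hpos
  have hIcc : ∀ x, b < x → x ≤ m → x ∈ t := fun x h1 h2 => mem_of_bgap_lt ht hpos h1 h2
  have hsle : s ≤ m := fmin_le hmem_m
  have hsb1 : s ≤ b + 1 := fmin_le (hIcc (b+1) (by omega) (by omega))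
  have hAs : s ≤ m - b := hA
  -- Step: 2*s ≤ m
  have h2s : 2 * s ≤ m := by
    by_contra hcon
    push_neg at hcon
    have hsb : s = b + 1 := by omega
    have hteq : t = Ico s (m + 1) := by
      ext x
      rw [mem_Ico]
      constructor
      · intro hx; exact ⟨fmin_le hx, by have := le_fmax hx; omega⟩
      · intro hx; exact hIcc x (by omega) (by omega)
    have hm2s : m = 2 * s - 1 := by omega
    exact hnp ⟨s, Or.inl (by rw [hteq]; congr 1; omega)⟩
  have hq : m - s + 1 ∈ t := hIcc _ (by omega) (by omega)
  have hsq : s ≠ m - s + 1 := by omega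
  have hqe : m - s + 1 ∈ t.erase s := mem_erase.2 ⟨by omega, hq⟩
  have hfm : fmap t = insert (m + 1) ((t.erase s).erase (m - s + 1)) := by
    rw [fmap, if_pos hA]
  have hm1 : m + 1 ∉ (t.erase s).erase (m - s + 1) := by
    intro hx
    have := le_fmax (Finset.mem_of_mem_erase (Finset.mem_of_mem_erase hx))
    omega
  have hmemt' : ∀ x, x ∈ fmap t ↔ x = m + 1 ∨ (x ∈ t ∧ x ≠ s ∧ x ≠ m - s + 1) := by
    intro x
    rw [hfm]
    simp only [mem_insert, mem_erase]
    grind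
  have ht' : (fmap t).Nonempty := ⟨m + 1, (hmemt' _).2 (Or.inl rfl)⟩
  have hpos' : ∀ i ∈ fmap t, 0 < i := by
    intro i hi
    rcases (hmemt' i).1 hi with rfl | ⟨hi, _, _⟩
    · omega
    · exact hpos _ hi
  have hmax' : fmax (fmap t) = m + 1 := by
    apply fmax_eq ((hmemt' _).2 (Or.inl rfl))
    intro x hx
    rcases (hmemt' x).1 hx with rfl | ⟨hx, _, _⟩
    · omega
    · have := le_fmax hx; omega
  have hmin' : s + 1 ≤ fmin (fmap t) := by
    have := fmin_mem ht'
    rcases (hmemt' _).1 this with h' | ⟨h1, h2, _⟩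
    · omega
    · have := fmin_le (t := t) h1; omega
  have hbg' : bgap (fmap t) = m - s + 1 := by
    apply bgap_eq ht' hpos'
    · intro hx
      rcases (hmemt' _).1 hx with h' | ⟨_, _, h3⟩
      · omega
      · exact h3 rfl
    · rw [hmax']; omega
    · intro x h1 h2
      rw [hmax'] at h2
      refine (hmemt' x).2 (Or.inr ⟨hIcc x (by omega) (by omega), by omega, by omega⟩)
  have hsig' : sig (fmap t) = s := by rw [sig, hmax', hbg']; omega
  have hbranch' : ¬ fmin (fmap t) ≤ sig (fmap t) := by rw [hsig']; omega
  -- involution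
  have hff : fmap (fmap t) = t := by
    rw [fmap, if_neg hbranch', hsig', hbg', hmax', hfm,
      Finset.erase_insert hm1, Finset.insert_erase hqe, Finset.insert_erase hmem_s]
  -- cardinality
  have hcard : (fmap t).card + 1 = t.card := by
    rw [hfm, Finset.card_insert_of_notMem hm1, Finset.card_erase_of_mem hqe,
      Finset.card_erase_of_mem hmem_s]
    have h1 : 2 ≤ t.card := by
      have : ({s, m - s + 1} : Finset ℕ) ⊆ t := by
        intro x hx
        simp only [mem_insert, mem_singleton] at hx
        rcases hx with rfl | rfl
        exacts [hmem_s, hq]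
      have := Finset.card_le_card this
      rwa [Finset.card_insert_of_notMem (by simpa using hsq), Finset.card_singleton] at this
    omega
  -- sum
  have hsum : (fmap t).sum id = t.sum id := by
    have e1 := Finset.sum_erase_add (t.erase s) id hqe
    have e2 := Finset.sum_erase_add t id hmem_s
    rw [hfm, Finset.sum_insert hm1]
    simp only [id] at *
    omega
  -- not pent
  have hnp' : ¬ IsPent (fmap t) := by
    intro hp
    obtain ⟨hEq, harith⟩ := pent_struct hp ht'
    rw [hmax'] at hEq harith
    have hnin : m - s + 1 ∉ fmap t := by
      intro hx
      rcases (hmemt' _).1 hx with h' | ⟨_, _, h3⟩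
      · omega
      · exact h3 rfl
    have hge : m - s + 2 ≤ fmin (fmap t) := by
      by_contra hcon
      push_neg at hcon
      exact hnin (by rw [hEq, mem_Ico]; omega)
    have hmem2 : m - s + 2 ∈ fmap t := by
      rcases Nat.lt_or_ge 1 s with hs2 | hs2
      · exact (hmemt' _).2 (Or.inr ⟨hIcc _ (by omega) (by omega), by omega, by omega⟩)
      · have : s = 1 := by omega
        exact (hmemt' _).2 (Or.inl (by omega))
    have hle : fmin (fmap t) ≤ m - s + 2 := fmin_le hmem2
    omega
  exact ⟨ht', hpos', hnp', hsum, hcard, hff⟩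


theorem caseB_spec (ht : t.Nonempty) (hpos : ∀ i ∈ t, 0 < i) (hnp : ¬ IsPent t)
    (hB : ¬ fmin t ≤ sig t) :
    (fmap t).Nonempty ∧ (∀ i ∈ fmap t, 0 < i) ∧ ¬ IsPent (fmap t) ∧
      (fmap t).sum id = t.sum id ∧ t.card + 1 = (fmap t).card ∧ fmap (fmap t) = t := by
  set m := fmax t with hm
  set s := fmin t with hs
  set b := bgap t with hb
  have hmem_m : m ∈ t := fmax_mem ht
  have hmem_s : s ∈ t := fmin_mem ht
  have hspos : 0 < s := hpos _ hmem_s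
  have hbnm : b ∉ t := bgap_not_mem ht hpos
  have hblt : b < m := bgap_lt ht hpos
  have hIcc : ∀ x, b < x → x ≤ m → x ∈ t := fun x h1 h2 => mem_of_bgap_lt ht hpos h1 h2
  have hsle : s ≤ m := fmin_le hmem_m
  have hsb1 : s ≤ b + 1 := fmin_le (hIcc (b+1) (by omega) (by omega))
  have hsig : sig t = m - b := rfl
  have hBs : m - b < s := by rw [hsig] at hB; omega
  -- σ < b
  have hsigb : m - b < b := by
    rcases Nat.lt_or_ge (m - b) b with h' | h'
    · exact h'
    · exfalso
      have hbe : m - b = b := by omega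
      have hm2b : m = 2 * b := by omega
      have hteq : t = Ico (b + 1) (m + 1) := by
        ext x
        rw [mem_Ico]
        constructor
        · intro hx
          have h1 := fmin_le hx
          have h2 := le_fmax hx
          constructor
          · omega
          · omega
        · intro hx; exact hIcc x (by omega) (by omega)
      exact hnp ⟨b, Or.inr (by rw [hteq]; congr 1 <;> omega)⟩
  set σ := m - b with hσ
  have hfm : fmap t = insert σ (insert b (t.erase m)) := by
    rw [fmap, if_neg hB, hsig, ← hb, ← hm]
  have hb_ne : b ∉ t.erase m := fun hx => hbnm (Finset.mem_of_mem_erase hx)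
  have hσ_ne : σ ∉ insert b (t.erase m) := by
    intro hx
    rcases Finset.mem_insert.1 hx with h' | h'
    · omega
    · have h1 := fmin_le (Finset.mem_of_mem_erase h')
      omega
  have hmemt' : ∀ x, x ∈ fmap t ↔ x = σ ∨ x = b ∨ (x ∈ t ∧ x ≠ m) := by
    intro x
    rw [hfm]
    simp only [mem_insert, mem_erase]
    grind
  have ht' : (fmap t).Nonempty := ⟨σ, (hmemt' _).2 (Or.inl rfl)⟩
  have hpos' : ∀ i ∈ fmap t, 0 < i := by
    intro i hi
    rcases (hmemt' i).1 hi with rfl | rfl | ⟨hi, _⟩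
    · omega
    · omega
    · exact hpos _ hi
  have hmax' : fmax (fmap t) = m - 1 := by
    apply fmax_eq
    · rcases Nat.lt_or_ge 1 σ with h' | h'
      · exact (hmemt' _).2 (Or.inr (Or.inr ⟨hIcc _ (by omega) (by omega), by omega⟩))
      · have : b = m - 1 := by omega
        exact (hmemt' _).2 (Or.inr (Or.inl this.symm))
    · intro x hx
      rcases (hmemt' x).1 hx with rfl | rfl | ⟨hx, hxm⟩
      · omega
      · omega
      · have := le_fmax hx; omega
  have hmin' : fmin (fmap t) = σ := by
    apply fmin_eq ((hmemt' _).2 (Or.inl rfl))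
    intro x hx
    rcases (hmemt' x).1 hx with rfl | rfl | ⟨hx, _⟩
    · omega
    · omega
    · have := fmin_le hx; omega
  have hbg' : bgap (fmap t) < b := by
    rcases Nat.lt_or_ge (bgap (fmap t)) b with h' | h'
    · exact h'
    · exfalso
      have h1 := bgap_lt ht' hpos'
      rw [hmax'] at h1
      have h2 : bgap (fmap t) ∈ fmap t := by
        rcases eq_or_lt_of_le h' with h'' | h''
        · exact (hmemt' _).2 (Or.inr (Or.inl h''.symm))
        · exact (hmemt' _).2 (Or.inr (Or.inr ⟨hIcc _ (by omega) (by omega), by omega⟩))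
      exact bgap_not_mem ht' hpos' h2
  have hbranch' : fmin (fmap t) ≤ sig (fmap t) := by
    rw [hmin', sig, hmax']
    omega
  have hff : fmap (fmap t) = t := by
    rw [fmap, if_pos hbranch', hmax', hmin']
    have harg : m - 1 - σ + 1 = b := by omega
    rw [harg, hfm, Finset.erase_insert hσ_ne, Finset.erase_insert hb_ne,
      show m - 1 + 1 = m from by omega, Finset.insert_erase hmem_m]
  have hcard : t.card + 1 = (fmap t).card := by
    rw [hfm, Finset.card_insert_of_notMem hσ_ne, Finset.card_insert_of_notMem hb_ne,
      Finset.card_erase_of_mem hmem_m]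
    have : 1 ≤ t.card := Finset.card_pos.2 ht
    omega
  have hsum : (fmap t).sum id = t.sum id := by
    have e1 := Finset.sum_erase_add t id hmem_m
    rw [hfm, Finset.sum_insert hσ_ne, Finset.sum_insert hb_ne]
    simp only [id] at *
    omega
  have hnp' : ¬ IsPent (fmap t) := by
    intro hp
    obtain ⟨_, harith⟩ := pent_struct hp ht'
    rw [hmax', hmin'] at harith
    omega
  exact ⟨ht', hpos', hnp', hsum, hcard, hff⟩

end facts

theorem neg_one_pow_add_eq_zero {c d : ℕ} (h : c + 1 = d) : (-1 : ℤ) ^ c + (-1) ^ d = 0 := by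
  subst h
  rw [pow_succ]
  ring

theorem E_top (n : ℕ) :
    E (fun _ => True) n = ∑ t ∈ (dset (fun _ => True) n).filter IsPent, (-1 : ℤ) ^ t.card := by
  classical
  rw [E, ← Finset.sum_filter_add_sum_filter_not (dset (fun _ => True) n) IsPent]
  have h0 : ∑ t ∈ (dset (fun _ => True) n).filter (fun t => ¬ IsPent t), (-1 : ℤ) ^ t.card = 0 := by
    apply Finset.sum_involution (fun a _ => fmap a)
    · intro a ha
      rw [mem_filter, mem_dset] at ha
      obtain ⟨⟨hpos, hsum⟩, hnp⟩ := ha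
      have hne : a.Nonempty := by
        rcases Finset.eq_empty_or_nonempty a with rfl | h
        · exact absurd ⟨0, Or.inl (by simp)⟩ hnp
        · exact h
      have hpos' : ∀ i ∈ a, 0 < i := fun i hi => (hpos i hi).1
      rcases le_or_gt (fmin a) (sig a) with hc | hc
      · have h := neg_one_pow_add_eq_zero (caseA_spec hne hpos' hnp hc).2.2.2.2.1
        rw [add_comm] at h; exact h
      · exact neg_one_pow_add_eq_zero (caseB_spec hne hpos' hnp (by omega)).2.2.2.2.1
    · intro a ha _
      rw [mem_filter, mem_dset] at ha
      obtain ⟨⟨hpos, hsum⟩, hnp⟩ := ha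
      have hne : a.Nonempty := by
        rcases Finset.eq_empty_or_nonempty a with rfl | h
        · exact absurd ⟨0, Or.inl (by simp)⟩ hnp
        · exact h
      have hpos' : ∀ i ∈ a, 0 < i := fun i hi => (hpos i hi).1
      intro heq
      rcases le_or_gt (fmin a) (sig a) with hc | hc
      · have := (caseA_spec hne hpos' hnp hc).2.2.2.2.1
        rw [heq] at this; omega
      · have := (caseB_spec hne hpos' hnp (by omega)).2.2.2.2.1
        rw [heq] at this; omega
    · intro a ha
      rw [mem_filter, mem_dset] at ha
      obtain ⟨⟨hpos, hsum⟩, hnp⟩ := ha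
      have hne : a.Nonempty := by
        rcases Finset.eq_empty_or_nonempty a with rfl | h
        · exact absurd ⟨0, Or.inl (by simp)⟩ hnp
        · exact h
      have hpos' : ∀ i ∈ a, 0 < i := fun i hi => (hpos i hi).1
      rcases le_or_gt (fmin a) (sig a) with hc | hc
      · obtain ⟨h1, h2, h3, h4, _, _⟩ := caseA_spec hne hpos' hnp hc
        rw [mem_filter, mem_dset]
        exact ⟨⟨fun i hi => ⟨h2 i hi, trivial⟩, h4.trans hsum⟩, h3⟩
      · obtain ⟨h1, h2, h3, h4, _, _⟩ := caseB_spec hne hpos' hnp (by omega)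
        rw [mem_filter, mem_dset]
        exact ⟨⟨fun i hi => ⟨h2 i hi, trivial⟩, h4.trans hsum⟩, h3⟩
    · intro a ha
      rw [mem_filter, mem_dset] at ha
      obtain ⟨⟨hpos, hsum⟩, hnp⟩ := ha
      have hne : a.Nonempty := by
        rcases Finset.eq_empty_or_nonempty a with rfl | h
        · exact absurd ⟨0, Or.inl (by simp)⟩ hnp
        · exact h
      have hpos' : ∀ i ∈ a, 0 < i := fun i hi => (hpos i hi).1
      rcases le_or_gt (fmin a) (sig a) with hc | hc
      · exact (caseA_spec hne hpos' hnp hc).2.2.2.2.2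
      · exact (caseB_spec hne hpos' hnp (by omega)).2.2.2.2.2
  rw [h0, add_zero]

theorem sumIcoA (j : ℕ) : 2 * (Ico j (2*j)).sum id + j = 3*j*j := by
  have h1 : (Ico 0 j).sum id + (Ico j (2*j)).sum id = (Ico 0 (2*j)).sum id :=
    Finset.sum_Ico_consecutive id (by omega) (by omega)
  have g1 := Finset.sum_range_id_mul_two j
  have g2 := Finset.sum_range_id_mul_two (2*j)
  rw [range_eq_Ico] at g1 g2
  have e1 : (Ico 0 j).sum id = ∑ i ∈ Ico 0 j, i := rfl
  have e2 : (Ico 0 (2*j)).sum id = ∑ i ∈ Ico 0 (2*j), i := rfl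
  rw [e1, e2] at h1
  cases j with
  | zero => simp
  | succ k =>
    rw [Nat.succ_sub_one] at g1
    have hsub : 2*(k+1) - 1 = 2*k+1 := by omega
    rw [hsub] at g2
    nlinarith [h1, g1, g2]

theorem sumIcoB (j : ℕ) : 2 * (Ico (j+1) (2*j+1)).sum id = 3*j*j + j := by
  have h1 : (Ico 0 (j+1)).sum id + (Ico (j+1) (2*j+1)).sum id = (Ico 0 (2*j+1)).sum id :=
    Finset.sum_Ico_consecutive id (by omega) (by omega)
  have g1 := Finset.sum_range_id_mul_two (j+1)
  have g2 := Finset.sum_range_id_mul_two (2*j+1)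
  rw [range_eq_Ico] at g1 g2
  have e1 : (Ico 0 (j+1)).sum id = ∑ i ∈ Ico 0 (j+1), i := rfl
  have e2 : (Ico 0 (2*j+1)).sum id = ∑ i ∈ Ico 0 (2*j+1), i := rfl
  rw [e1, e2] at h1
  rw [Nat.succ_sub_one] at g1
  have hsub : 2*j+1 - 1 = 2*j := by omega
  rw [hsub] at g2
  nlinarith [h1, g1, g2]

theorem pentInjZ {a b : ℤ} (h : a * (3*a - 1) = b * (3*b - 1)) : a = b := by
  have h2 : (a - b) * (3*(a+b) - 1) = 0 := by linear_combination h
  rcases mul_eq_zero.1 h2 with h3 | h3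
  · omega
  · omega

/-- the canonical pentagonal fixed set for index `j : ℤ` -/
noncomputable def pfix (j : ℤ) : Finset ℕ :=
  if 0 ≤ j then Ico j.toNat (2 * j.toNat) else Ico ((-j).toNat + 1) (2 * (-j).toNat + 1)

theorem pfix_card (j : ℤ) : (pfix j).card = j.natAbs := by
  rw [pfix]
  split_ifs with h <;> rw [Nat.card_Ico] <;> omega

theorem pfix_pent (j : ℤ) : IsPent (pfix j) := by
  rw [pfix]
  split_ifs with h
  · exact ⟨j.toNat, Or.inl rfl⟩
  · exact ⟨(-j).toNat, Or.inr rfl⟩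

theorem pfix_mem (n : ℕ) (j : ℤ) (hj : 2*(n:ℤ) = j*(3*j-1)) :
    pfix j ∈ dset (fun _ => True) n := by
  rw [mem_dset]
  constructor
  · intro i hi
    refine ⟨?_, trivial⟩
    rw [pfix] at hi
    split_ifs at hi with h <;> rw [mem_Ico] at hi <;> omega
  · rw [pfix]
    split_ifs with h
    · set k := j.toNat with hk
      have hjk : (k : ℤ) = j := Int.toNat_of_nonneg h
      have h1 := sumIcoA k
      have hZ : ((2*n + k : ℕ) : ℤ) = ((3*k*k : ℕ) : ℤ) := by
        push_cast
        rw [hjk]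
        linear_combination hj
      have hN : 2*n + k = 3*k*k := by exact_mod_cast hZ
      have h1' : 2 * (∑ x ∈ Ico k (2*k), id x) + k = 3*k*k := h1
      omega
    · set k := (-j).toNat with hk
      have hjk : (k : ℤ) = -j := Int.toNat_of_nonneg (by omega)
      have h1 := sumIcoB k
      have hZ : ((2*n : ℕ) : ℤ) = ((3*k*k + k : ℕ) : ℤ) := by
        push_cast
        rw [hjk]
        linear_combination hj
      have hN : 2*n = 3*k*k + k := by exact_mod_cast hZ
      have h1' : 2 * (∑ x ∈ Ico (k+1) (2*k+1), id x) = 3*k*k + k := h1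
      omega

theorem pent_sum_index {n : ℕ} {t : Finset ℕ} (ht : t ∈ (dset (fun _ => True) n).filter IsPent)
    (j : ℤ) (hj : 2*(n:ℤ) = j*(3*j-1)) : t = pfix j := by
  rw [mem_filter, mem_dset] at ht
  obtain ⟨⟨hpos, hsum⟩, i, hi | hi⟩ := ht
  · have h1 := sumIcoA i
    rw [← hi, hsum] at h1
    have hZ : ((2*n + i : ℕ) : ℤ) = ((3*i*i : ℕ) : ℤ) := by exact_mod_cast h1
    push_cast at hZ
    have h2 : ((i:ℤ)) * (3*(i:ℤ)-1) = j * (3*j-1) := by linear_combination hj - hZ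
    have h3 : (i : ℤ) = j := pentInjZ h2
    rw [pfix, if_pos (h3 ▸ Int.natCast_nonneg i), hi]
    congr 1 <;> omega
  · have h1 := sumIcoB i
    rw [← hi, hsum] at h1
    have hZ : ((2*n : ℕ) : ℤ) = ((3*i*i + i : ℕ) : ℤ) := by exact_mod_cast h1
    push_cast at hZ
    have h2 : (-(i:ℤ)) * (3*(-(i:ℤ))-1) = j * (3*j-1) := by linear_combination hj - hZ
    have h3 : -(i:ℤ) = j := pentInjZ h2
    rw [pfix]
    split_ifs with h
    · have hi0 : i = 0 := by omega
      subst hi0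
      have hj0 : j = 0 := by omega
      rw [hi]
      simp [hj0]
    · rw [hi]
      congr 2 <;> omega

theorem E_top_pent (n : ℕ) (j : ℤ) (hj : 2*(n:ℤ) = j*(3*j-1)) :
    E (fun _ => True) n = if Even j then 1 else -1 := by
  rw [E_top]
  have hset : (dset (fun _ => True) n).filter IsPent = {pfix j} := by
    apply Finset.eq_singleton_iff_unique_mem.2
    constructor
    · rw [mem_filter]
      exact ⟨pfix_mem n j hj, pfix_pent j⟩
    · intro t ht
      exact pent_sum_index ht j hj
  rw [hset, Finset.sum_singleton, pfix_card]
  rcases Int.even_or_odd j with he | ho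
  · rw [if_pos he]
    exact Even.neg_one_pow (Int.natAbs_even.2 he)
  · rw [if_neg (Int.not_even_iff_odd.2 ho)]
    exact Odd.neg_one_pow (Int.natAbs_odd.2 ho)

theorem E_top_nonpent (n : ℕ) (h : ¬ ∃ j : ℤ, 2*(n:ℤ) = j*(3*j-1)) :
    E (fun _ => True) n = 0 := by
  rw [E_top]
  have hset : (dset (fun _ => True) n).filter IsPent = ∅ := by
    rw [Finset.eq_empty_iff_forall_notMem]
    intro t ht
    rw [mem_filter, mem_dset] at ht
    obtain ⟨⟨hpos, hsum⟩, i, hi | hi⟩ := ht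
    · have h1 := sumIcoA i
      rw [← hi, hsum] at h1
      have hZ : ((2*n + i : ℕ) : ℤ) = ((3*i*i : ℕ) : ℤ) := by exact_mod_cast h1
      push_cast at hZ
      exact h ⟨i, by linear_combination hZ⟩
    · have h1 := sumIcoB i
      rw [← hi, hsum] at h1
      have hZ : ((2*n : ℕ) : ℤ) = ((3*i*i + i : ℕ) : ℤ) := by exact_mod_cast h1
      push_cast at hZ
      exact h ⟨-(i:ℤ), by linear_combination hZ⟩
  rw [hset, Finset.sum_empty]

theorem dset_dvd_empty {d n : ℕ} (hn : ¬ d ∣ n) : dset (d ∣ ·) n = ∅ := by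
  rw [Finset.eq_empty_iff_forall_notMem]
  intro t ht
  rw [mem_dset] at ht
  exact hn (ht.2 ▸ Finset.dvd_sum fun i hi => (ht.1 i hi).2)

theorem E_dvd (d m : ℕ) (hd : 0 < d) :
    E (d ∣ ·) (d * m) = E (fun _ => True) m := by
  rw [E, E]
  apply Finset.sum_nbij' (i := fun t => t.image (· / d)) (j := fun u => u.image (d * ·))
  · intro t ht
    rw [mem_dset] at ht ⊢
    constructor
    · intro x hx
      rw [Finset.mem_image] at hx
      obtain ⟨y, hy, rfl⟩ := hx
      obtain ⟨hy1, hy2⟩ := ht.1 y hy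
      exact ⟨Nat.div_pos (Nat.le_of_dvd hy1 hy2) hd, trivial⟩
    · have hinj : Set.InjOn (· / d) ↑t := by
        intro x hx y hy hxy
        have hx2 := (ht.1 x hx).2
        have hy2 := (ht.1 y hy).2
        simp only at hxy
        rw [← Nat.div_mul_cancel hx2, ← Nat.div_mul_cancel hy2, hxy]
      rw [Finset.sum_image hinj]
      have : d * (∑ y ∈ t, y / d) = d * m := by
        rw [Finset.mul_sum]
        have : ∑ y ∈ t, d * (y / d) = ∑ y ∈ t, y :=
          Finset.sum_congr rfl fun y hy => Nat.mul_div_cancel' (ht.1 y hy).2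
        rw [this]
        exact ht.2
      exact Nat.eq_of_mul_eq_mul_left hd this
  · intro u hu
    rw [mem_dset] at hu ⊢
    constructor
    · intro x hx
      rw [Finset.mem_image] at hx
      obtain ⟨y, hy, rfl⟩ := hx
      exact ⟨Nat.mul_pos hd (hu.1 y hy).1, Dvd.intro _ rfl⟩
    · rw [Finset.sum_image fun x _ y _ h => Nat.eq_of_mul_eq_mul_left hd h]
      rw [show (∑ y ∈ u, id (d * y)) = d * ∑ y ∈ u, y from by rw [Finset.mul_sum]; rfl]
      rw [show (u.sum id) = ∑ y ∈ u, y from rfl] at hu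
      rw [hu.2]
  · intro t ht
    rw [mem_dset] at ht
    rw [Finset.image_image]
    have : t.image ((d * ·) ∘ (· / d)) = t.image id := by
      apply Finset.image_congr
      intro x hx
      exact Nat.mul_div_cancel' (ht.1 x hx).2
    rw [this, Finset.image_id]
  · intro u hu
    rw [Finset.image_image]
    have : u.image ((· / d) ∘ (d * ·)) = u.image id := by
      apply Finset.image_congr
      intro x hx
      simp only [Function.comp_apply, id_eq]
      exact Nat.mul_div_cancel_left x hd
    rw [this, Finset.image_id]
  · intro t ht
    rw [mem_dset] at ht
    congr 1
    symm
    apply Finset.card_image_of_injOn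
    intro x hx y hy hxy
    have hx2 := (ht.1 x hx).2
    have hy2 := (ht.1 y hy).2
    simp only at hxy
    rw [← Nat.div_mul_cancel hx2, ← Nat.div_mul_cancel hy2, hxy]

theorem evenZ (j : ℤ) : Even (j * (3*j - 1)) := by
  rcases Int.even_or_odd j with ⟨c, hc⟩ | ⟨c, hc⟩
  · exact ⟨c * (3*j-1), by rw [hc]; ring⟩
  · exact ⟨j * (3*c + 1), by rw [hc]; ring⟩

theorem E_P2_pent (k : ℕ) (j : ℤ) (hj : (k:ℤ) = j*(3*j-1)) :
    E (2 ∣ ·) k = if Even j then 1 else -1 := by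
  have h2 : 2 ∣ k := by
    obtain ⟨c, hc⟩ := evenZ j
    have : (k:ℤ) = 2 * c := by rw [hj, hc]; ring
    have hc0 : 0 ≤ c := by omega
    exact ⟨c.toNat, by omega⟩
  obtain ⟨m, rfl⟩ := h2
  rw [E_dvd 2 m (by norm_num)]
  exact E_top_pent m j (by push_cast at hj ⊢; linarith)

theorem E_P2_zero (k : ℕ) (h : ¬ ∃ j : ℤ, (k:ℤ) = j*(3*j-1)) :
    E (2 ∣ ·) k = 0 := by
  by_cases h2 : 2 ∣ k
  · obtain ⟨m, rfl⟩ := h2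
    rw [E_dvd 2 m (by norm_num)]
    apply E_top_nonpent
    intro ⟨j, hj⟩
    exact h ⟨j, by push_cast; linarith⟩
  · rw [E, dset_dvd_empty h2, Finset.sum_empty]

theorem E_P6_pent (n : ℕ) (j : ℤ) (hj : (n:ℤ) = 3*(j*(3*j-1))) :
    E (6 ∣ ·) n = if Even j then 1 else -1 := by
  have h6 : 6 ∣ n := by
    obtain ⟨c, hc⟩ := evenZ j
    have : (n:ℤ) = 6 * c := by rw [hj, hc]; ring
    have hc0 : 0 ≤ c := by omega
    exact ⟨c.toNat, by omega⟩
  obtain ⟨m, rfl⟩ := h6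
  rw [E_dvd 6 m (by norm_num)]
  exact E_top_pent m j (by push_cast at hj ⊢; linarith)

theorem E_P6_zero (n : ℕ) (h : ¬ ∃ j : ℤ, (n:ℤ) = 3*(j*(3*j-1))) :
    E (6 ∣ ·) n = 0 := by
  by_cases h6 : 6 ∣ n
  · obtain ⟨m, rfl⟩ := h6
    rw [E_dvd 6 m (by norm_num)]
    apply E_top_nonpent
    intro ⟨j, hj⟩
    exact h ⟨j, by push_cast; linarith⟩
  · rw [E, dset_dvd_empty h6, Finset.sum_empty]

def good (i : ℕ) : Prop := i % 6 = 2 ∨ i % 6 = 4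

instance : DecidablePred good := fun i => inferInstanceAs (Decidable (_ ∨ _))

def Om (r : ℕ) : Finset (Finset ℕ × Multiset ℕ) :=
  (antidiagonal r).biUnion fun kl => (dset good kl.1) ×ˢ (mset good kl.2)

theorem mem_Om {r : ℕ} {x : Finset ℕ × Multiset ℕ} :
    x ∈ Om r ↔ (∀ i ∈ x.1, 0 < i ∧ good i) ∧ (∀ i ∈ x.2, 0 < i ∧ good i) ∧
      x.1.sum id + x.2.sum = r := by
  rw [Om, Finset.mem_biUnion]
  constructor
  · rintro ⟨kl, hkl, hx⟩
    rw [Finset.mem_product] at hx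
    rw [Finset.HasAntidiagonal.mem_antidiagonal] at hkl
    obtain ⟨h1, h2⟩ := hx
    rw [mem_dset] at h1
    rw [mem_mset] at h2
    exact ⟨h1.1, h2.1, by rw [h1.2, h2.2, hkl]⟩
  · rintro ⟨h1, h2, h3⟩
    refine ⟨(x.1.sum id, x.2.sum), ?_, ?_⟩
    · rw [Finset.HasAntidiagonal.mem_antidiagonal]; exact h3
    · rw [Finset.mem_product]
      exact ⟨mem_dset.2 ⟨h1, rfl⟩, mem_mset.2 ⟨h2, rfl⟩⟩

theorem sum_Om (r : ℕ) (f : Finset ℕ × Multiset ℕ → ℤ) :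
    ∑ x ∈ Om r, f x =
      ∑ kl ∈ antidiagonal r, ∑ x ∈ (dset good kl.1) ×ˢ (mset good kl.2), f x := by
  apply Finset.sum_biUnion
  intro kl hkl kl' hkl' hne
  simp only [Finset.disjoint_left]
  intro x hx hx'
  rw [Finset.mem_product] at hx hx'
  apply hne
  have e1 := (mem_dset.1 hx.1).2
  have e2 := (mem_mset.1 hx.2).2
  have e1' := (mem_dset.1 hx'.1).2
  have e2' := (mem_mset.1 hx'.2).2
  exact Prod.ext (by rw [← e1, ← e1']) (by rw [← e2, ← e2'])

theorem omega_sum (r : ℕ) :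
    ∑ x ∈ Om r, (-1:ℤ)^x.1.card =
      ∑ kl ∈ antidiagonal r, E good kl.1 * ((mset good kl.2).card : ℤ) := by
  rw [sum_Om]
  apply Finset.sum_congr rfl
  intro kl _
  rw [Finset.sum_product]
  rw [E, Finset.sum_mul]
  apply Finset.sum_congr rfl
  intro t _
  have : ∀ y ∈ mset good kl.2, ((-1:ℤ))^((t, y).1.card) = (-1)^t.card := fun _ _ => rfl
  rw [Finset.sum_congr rfl this, Finset.sum_const, nsmul_eq_mul, mul_comm]

theorem Om_zero : Om 0 = {(∅, 0)} := by
  ext x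
  rw [mem_Om, Finset.mem_singleton]
  constructor
  · rintro ⟨h1, h2, h3⟩
    have h3' : (∑ i ∈ x.1, i) + x.2.sum = 0 := h3
    have ht : x.1 = ∅ := by
      rw [Finset.eq_empty_iff_forall_notMem]
      intro i hi
      have hle : i ≤ ∑ i ∈ x.1, i :=
        Finset.single_le_sum (f := fun i => i) (fun _ _ => Nat.zero_le _) hi
      have := (h1 i hi).1
      omega
    have hM : x.2 = 0 := by
      rw [Multiset.eq_zero_iff_forall_notMem]
      intro a ha
      have hle : a ≤ x.2.sum := Multiset.single_le_sum (fun _ _ => Nat.zero_le _) _ ha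
      have := (h2 a ha).1
      omega
    exact Prod.ext ht hM
  · rintro rfl
    exact ⟨by simp, by simp, by simp⟩

/-- largest part appearing in the pair -/
def amax (x : Finset ℕ × Multiset ℕ) : ℕ := max (fmax x.1) (fmax x.2.toFinset)

def mov (x : Finset ℕ × Multiset ℕ) : Finset ℕ × Multiset ℕ :=
  if amax x ∈ x.1 then (x.1.erase (amax x), amax x ::ₘ x.2)
  else (insert (amax x) x.1, x.2.erase (amax x))

theorem amax_spec {x : Finset ℕ × Multiset ℕ} (h1 : ∀ i ∈ x.1, 0 < i)
    (h2 : ∀ i ∈ x.2, 0 < i) (hne : x.1.Nonempty ∨ x.2 ≠ 0) :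
    (amax x ∈ x.1 ∨ amax x ∈ x.2) ∧ (∀ i ∈ x.1, i ≤ amax x) ∧ ∀ i ∈ x.2, i ≤ amax x := by
  have hub1 : ∀ i ∈ x.1, i ≤ amax x := fun i hi => le_trans (le_fmax hi) (le_max_left _ _)
  have hub2 : ∀ i ∈ x.2, i ≤ amax x := fun i hi =>
    le_trans (le_fmax (Multiset.mem_toFinset.2 hi)) (le_max_right _ _)
  refine ⟨?_, hub1, hub2⟩
  rcases Finset.eq_empty_or_nonempty x.1 with he | hx1
  · have hM : x.2 ≠ 0 := by
      rcases hne with h | h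
      · rw [he] at h; exact absurd h (by simp)
      · exact h
    have htf : x.2.toFinset.Nonempty := by
      obtain ⟨a, ha⟩ := Multiset.exists_mem_of_ne_zero hM
      exact ⟨a, Multiset.mem_toFinset.2 ha⟩
    right
    have hamax : amax x = fmax x.2.toFinset := by
      rw [amax, he]
      have h0 : fmax (∅ : Finset ℕ) = 0 := by rw [fmax, dif_neg (by simp)]
      rw [h0]
      exact Nat.max_eq_right (Nat.zero_le _)
    rw [hamax]
    exact Multiset.mem_toFinset.1 (fmax_mem htf)
  · rcases eq_or_ne x.2 0 with hM | hM
    · left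
      have hamax : amax x = fmax x.1 := by
        rw [amax, hM]
        have h0 : fmax (0 : Multiset ℕ).toFinset = 0 := by rw [fmax, dif_neg (by simp)]
        rw [h0]
        exact Nat.max_eq_left (Nat.zero_le _)
      rw [hamax]
      exact fmax_mem hx1
    · have htf : x.2.toFinset.Nonempty := by
        obtain ⟨a, ha⟩ := Multiset.exists_mem_of_ne_zero hM
        exact ⟨a, Multiset.mem_toFinset.2 ha⟩
      rcases max_choice (fmax x.1) (fmax x.2.toFinset) with hc | hc
      · left; rw [amax, hc]; exact fmax_mem hx1
      · right; rw [amax, hc]; exact Multiset.mem_toFinset.1 (fmax_mem htf)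

theorem Om_nonempty_parts {r : ℕ} (hr : 0 < r) {x : Finset ℕ × Multiset ℕ}
    (h3 : x.1.sum id + x.2.sum = r) : x.1.Nonempty ∨ x.2 ≠ 0 := by
  by_contra hc
  push_neg at hc
  obtain ⟨hc1, hc2⟩ := hc
  rw [hc1, hc2] at h3
  simp at h3
  omega

theorem invrel (r : ℕ) (hr : 0 < r) : ∑ x ∈ Om r, (-1:ℤ)^x.1.card = 0 := by
  apply Finset.sum_involution (fun x _ => mov x)
  · intro x hx
    rw [mem_Om] at hx
    obtain ⟨h1, h2, h3⟩ := hx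
    obtain ⟨hmem, hub1, hub2⟩ := amax_spec (fun i hi => (h1 i hi).1)
      (fun i hi => (h2 i hi).1) (Om_nonempty_parts hr h3)
    rw [mov]
    split_ifs with ht
    · have h := neg_one_pow_add_eq_zero
        (show (x.1.erase (amax x)).card + 1 = x.1.card from by
          rw [Finset.card_erase_of_mem ht]
          have := Finset.card_pos.2 ⟨_, ht⟩
          omega)
      rw [add_comm] at h
      exact h
    · exact neg_one_pow_add_eq_zero
        (show x.1.card + 1 = (insert (amax x) x.1).card from
          (Finset.card_insert_of_notMem ht).symm)
  · intro x hx _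
    rw [mov]
    split_ifs with ht
    · intro heq
      have := congrArg (fun y => y.1.card) heq
      simp only [Finset.card_erase_of_mem ht] at this
      have := Finset.card_pos.2 ⟨_, ht⟩
      omega
    · intro heq
      have := congrArg (fun y => y.1.card) heq
      simp only [Finset.card_insert_of_notMem ht] at this
      omega
  · intro x hx
    rw [mem_Om] at hx
    obtain ⟨h1, h2, h3⟩ := hx
    obtain ⟨hmem, hub1, hub2⟩ := amax_spec (fun i hi => (h1 i hi).1)
      (fun i hi => (h2 i hi).1) (Om_nonempty_parts hr h3)
    rw [mem_Om, mov]
    split_ifs with ht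
    · refine ⟨fun i hi => h1 i (Finset.mem_of_mem_erase hi), ?_, ?_⟩
      · intro i hi
        rw [Multiset.mem_cons] at hi
        rcases hi with rfl | hi
        · exact h1 _ ht
        · exact h2 i hi
      · show (∑ i ∈ x.1.erase (amax x), i) + (amax x ::ₘ x.2).sum = r
        have e1 : (∑ i ∈ x.1.erase (amax x), i) + amax x = ∑ i ∈ x.1, i :=
          Finset.sum_erase_add x.1 id ht
        have h3' : (∑ i ∈ x.1, i) + x.2.sum = r := h3
        rw [Multiset.sum_cons]
        omega
    · have ha2 : amax x ∈ x.2 := hmem.resolve_left ht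
      refine ⟨?_, fun i hi => h2 i (Multiset.mem_of_mem_erase hi), ?_⟩
      · intro i hi
        rw [Finset.mem_insert] at hi
        rcases hi with rfl | hi
        · exact h2 _ ha2
        · exact h1 i hi
      · show (∑ i ∈ insert (amax x) x.1, i) + (x.2.erase (amax x)).sum = r
        rw [Finset.sum_insert ht]
        have e2 : amax x + (x.2.erase (amax x)).sum = x.2.sum := by
          conv_rhs => rw [← Multiset.cons_erase ha2]
          rw [Multiset.sum_cons]
        have h3' : (∑ i ∈ x.1, i) + x.2.sum = r := h3
        omega
  · intro x hx
    rw [mem_Om] at hx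
    obtain ⟨h1, h2, h3⟩ := hx
    obtain ⟨hmem, hub1, hub2⟩ := amax_spec (fun i hi => (h1 i hi).1)
      (fun i hi => (h2 i hi).1) (Om_nonempty_parts hr h3)
    by_cases hc : amax x ∈ x.1
    · have hmx : mov x = (x.1.erase (amax x), amax x ::ₘ x.2) := by rw [mov, if_pos hc]
      have hA : amax (x.1.erase (amax x), amax x ::ₘ x.2) = amax x := by
        rw [amax]
        have hright : fmax (amax x ::ₘ x.2).toFinset = amax x := by
          apply fmax_eq
          · rw [Multiset.mem_toFinset]; exact Multiset.mem_cons_self _ _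
          · intro y hy
            rw [Multiset.mem_toFinset, Multiset.mem_cons] at hy
            rcases hy with rfl | hy
            · exact le_refl _
            · exact hub2 _ hy
        show max (fmax (x.1.erase (amax x))) (fmax (amax x ::ₘ x.2).toFinset) = amax x
        rw [hright]
        apply Nat.max_eq_right
        rcases Finset.eq_empty_or_nonempty (x.1.erase (amax x)) with he | hne'
        · rw [he, fmax, dif_neg (by simp)]; exact Nat.zero_le _
        · exact hub1 _ (Finset.mem_of_mem_erase (fmax_mem hne'))
      rw [hmx, mov, hA, if_neg (Finset.notMem_erase _ _)]
      show (insert (amax x) (x.1.erase (amax x)), (amax x ::ₘ x.2).erase (amax x)) = x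
      rw [Finset.insert_erase hc, Multiset.erase_cons_head]
    · have ha2 : amax x ∈ x.2 := hmem.resolve_left hc
      have hmx : mov x = (insert (amax x) x.1, x.2.erase (amax x)) := by rw [mov, if_neg hc]
      have hA : amax (insert (amax x) x.1, x.2.erase (amax x)) = amax x := by
        have hleft : fmax (insert (amax x) x.1) = amax x := by
          apply fmax_eq (Finset.mem_insert_self _ _)
          intro y hy
          rcases Finset.mem_insert.1 hy with rfl | hy
          · exact le_refl _
          · exact hub1 _ hy
        show max (fmax (insert (amax x) x.1)) (fmax (x.2.erase (amax x)).toFinset) = amax x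
        rw [hleft]
        apply Nat.max_eq_left
        rcases Finset.eq_empty_or_nonempty (x.2.erase (amax x)).toFinset with he | hne'
        · rw [fmax, dif_neg (by rw [he]; simp)]; exact Nat.zero_le _
        · exact hub2 _ (Multiset.mem_of_mem_erase (Multiset.mem_toFinset.1 (fmax_mem hne')))
      rw [hmx, mov, hA, if_pos (Finset.mem_insert_self _ _)]
      show ((insert (amax x) x.1).erase (amax x), amax x ::ₘ (x.2.erase (amax x))) = x
      rw [Finset.erase_insert hc, Multiset.cons_erase ha2]

theorem good_even {i : ℕ} (h : good i) : 2 ∣ i := by rcases h with h | h <;> omega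

theorem six_even {i : ℕ} (h : 6 ∣ i) : 2 ∣ i := by omega

theorem even_split {i : ℕ} (h : 2 ∣ i) : good i ∨ 6 ∣ i := by
  rw [good]
  omega

theorem good_not_six {i : ℕ} (h : good i) : ¬ 6 ∣ i := by
  rcases h with h | h <;> omega

def Om2 (n : ℕ) : Finset (Finset ℕ × Finset ℕ) :=
  (antidiagonal n).biUnion fun kl => (dset good kl.1) ×ˢ (dset (6 ∣ ·) kl.2)

theorem mem_Om2 {n : ℕ} {x : Finset ℕ × Finset ℕ} :
    x ∈ Om2 n ↔ (∀ i ∈ x.1, 0 < i ∧ good i) ∧ (∀ i ∈ x.2, 0 < i ∧ 6 ∣ i) ∧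
      x.1.sum id + x.2.sum id = n := by
  rw [Om2, Finset.mem_biUnion]
  constructor
  · rintro ⟨kl, hkl, hx⟩
    rw [Finset.mem_product] at hx
    rw [Finset.HasAntidiagonal.mem_antidiagonal] at hkl
    obtain ⟨h1, h2⟩ := hx
    rw [mem_dset] at h1 h2
    exact ⟨h1.1, h2.1, by rw [h1.2, h2.2, hkl]⟩
  · rintro ⟨h1, h2, h3⟩
    refine ⟨(x.1.sum id, x.2.sum id), by rw [Finset.HasAntidiagonal.mem_antidiagonal]; exact h3, ?_⟩
    rw [Finset.mem_product]
    exact ⟨mem_dset.2 ⟨h1, rfl⟩, mem_dset.2 ⟨h2, rfl⟩⟩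

theorem sum_Om2 (n : ℕ) (f : Finset ℕ × Finset ℕ → ℤ) :
    ∑ x ∈ Om2 n, f x =
      ∑ kl ∈ antidiagonal n, ∑ x ∈ (dset good kl.1) ×ˢ (dset (6 ∣ ·) kl.2), f x := by
  apply Finset.sum_biUnion
  intro kl hkl kl' hkl' hne
  simp only [Finset.disjoint_left]
  intro x hx hx'
  rw [Finset.mem_product] at hx hx'
  apply hne
  have e1 := (mem_dset.1 hx.1).2
  have e2 := (mem_dset.1 hx.2).2
  have e1' := (mem_dset.1 hx'.1).2
  have e2' := (mem_dset.1 hx'.2).2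
  exact Prod.ext (by rw [← e1, ← e1']) (by rw [← e2, ← e2'])

theorem filter_not_good {t : Finset ℕ} (ht : ∀ i ∈ t, 0 < i ∧ 2 ∣ i) :
    t.filter (fun i => ¬ good i) = t.filter (6 ∣ ·) := by
  apply Finset.filter_congr
  intro i hi
  obtain ⟨hpos, hdvd⟩ := ht i hi
  exact ⟨fun hng => (even_split hdvd).resolve_left hng, fun h6 hg => good_not_six hg h6⟩

theorem E2_split (n : ℕ) :
    E (2 ∣ ·) n = ∑ kl ∈ antidiagonal n, E good kl.1 * E (6 ∣ ·) kl.2 := by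
  have step1 : ∑ kl ∈ antidiagonal n, E good kl.1 * E (6 ∣ ·) kl.2 =
      ∑ x ∈ Om2 n, (-1:ℤ)^(x.1.card + x.2.card) := by
    rw [sum_Om2]
    apply Finset.sum_congr rfl
    intro kl _
    rw [E, E, Finset.sum_mul_sum, Finset.sum_product]
    apply Finset.sum_congr rfl
    intro t1 _
    apply Finset.sum_congr rfl
    intro t2 _
    rw [pow_add]
  rw [step1, E]
  apply Finset.sum_nbij' (i := fun t => (t.filter good, t.filter (6 ∣ ·)))
    (j := fun x => x.1 ∪ x.2)
  · intro t ht
    rw [mem_dset] at ht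
    rw [mem_Om2]
    have hfilt := filter_not_good (fun i hi => ⟨(ht.1 i hi).1, (ht.1 i hi).2⟩)
    refine ⟨fun i hi => ⟨(ht.1 i (Finset.mem_of_mem_filter i hi)).1, (Finset.mem_filter.1 hi).2⟩,
      fun i hi => ⟨(ht.1 i (Finset.mem_of_mem_filter i hi)).1, (Finset.mem_filter.1 hi).2⟩, ?_⟩
    rw [← hfilt, Finset.sum_filter_add_sum_filter_not]
    exact ht.2
  · intro x hx
    rw [mem_Om2] at hx
    obtain ⟨h1, h2, h3⟩ := hx
    rw [mem_dset]
    have hdisj : Disjoint x.1 x.2 := by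
      rw [Finset.disjoint_left]
      intro a ha ha'
      exact good_not_six (h1 a ha).2 (h2 a ha').2
    constructor
    · intro i hi
      rcases Finset.mem_union.1 hi with hi | hi
      · exact ⟨(h1 i hi).1, good_even (h1 i hi).2⟩
      · exact ⟨(h2 i hi).1, six_even (h2 i hi).2⟩
    · rw [Finset.sum_union hdisj]
      exact h3
  · intro t ht
    rw [mem_dset] at ht
    have hfilt := filter_not_good (fun i hi => ⟨(ht.1 i hi).1, (ht.1 i hi).2⟩)
    show t.filter good ∪ t.filter (6 ∣ ·) = t
    rw [← hfilt, Finset.filter_union_filter_not_eq]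
  · intro x hx
    rw [mem_Om2] at hx
    obtain ⟨h1, h2, h3⟩ := hx
    show ((x.1 ∪ x.2).filter good, (x.1 ∪ x.2).filter (6 ∣ ·)) = x
    have e1 : (x.1 ∪ x.2).filter good = x.1 := by
      rw [Finset.filter_union, Finset.filter_true_of_mem (fun i hi => (h1 i hi).2),
        Finset.filter_false_of_mem (fun i hi hg => good_not_six hg (h2 i hi).2),
        Finset.union_empty]
    have e2 : (x.1 ∪ x.2).filter (6 ∣ ·) = x.2 := by
      rw [Finset.filter_union,
        Finset.filter_false_of_mem (fun i hi h6 => good_not_six (h1 i hi).2 h6),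
        Finset.filter_true_of_mem (fun i hi => (h2 i hi).2), Finset.empty_union]
    rw [e1, e2]
  · intro t ht
    rw [mem_dset] at ht
    have hfilt := filter_not_good (fun i hi => ⟨(ht.1 i hi).1, (ht.1 i hi).2⟩)
    have hcard : (t.filter good).card + (t.filter (6 ∣ ·)).card = t.card := by
      rw [← hfilt]
      exact Finset.card_filter_add_card_filter_not (p := good)
    show (-1:ℤ)^t.card = (-1:ℤ)^((t.filter good).card + (t.filter (6 ∣ ·)).card)
    rw [hcard]

theorem s2_mset (l : ℕ) : (mset good l).card = s2 l := by
  rw [card_mset, s2]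
  congr 1

theorem good_conv (m : ℕ) :
    ∑ kl ∈ antidiagonal m, E good kl.1 * ((s2 kl.2 : ℕ) : ℤ) = if m = 0 then 1 else 0 := by
  have h1 : ∑ kl ∈ antidiagonal m, E good kl.1 * ((s2 kl.2 : ℕ) : ℤ) =
      ∑ x ∈ Om m, (-1:ℤ)^x.1.card := by
    rw [omega_sum m]
    apply Finset.sum_congr rfl
    intro kl _
    rw [s2_mset]
  rw [h1]
  rcases Nat.eq_zero_or_pos m with rfl | hm
  · rw [Om_zero, Finset.sum_singleton, if_pos rfl]
    simp
  · rw [invrel m hm, if_neg (by omega)]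

theorem conv_id (n : ℕ) :
    ∑ kl ∈ antidiagonal n, E (2 ∣ ·) kl.1 * ((s2 kl.2 : ℕ) : ℤ) = E (6 ∣ ·) n := by
  classical
  set F : PowerSeries ℤ := PowerSeries.mk fun k => E good k with hF
  set S : PowerSeries ℤ := PowerSeries.mk fun l => ((s2 l : ℕ) : ℤ) with hS
  set G : PowerSeries ℤ := PowerSeries.mk fun l => E (6 ∣ ·) l with hG
  have hFS : F * S = 1 := by
    apply PowerSeries.ext
    intro m
    rw [PowerSeries.coeff_mul, PowerSeries.coeff_one]
    simp only [hF, hS, PowerSeries.coeff_mk]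
    exact good_conv m
  have hsplit : (PowerSeries.mk fun k => E (2 ∣ ·) k) = F * G := by
    apply PowerSeries.ext
    intro m
    rw [PowerSeries.coeff_mul]
    simp only [hF, hG, PowerSeries.coeff_mk]
    exact E2_split m
  have key : (PowerSeries.mk fun k => E (2 ∣ ·) k) * S = G := by
    rw [hsplit]
    calc F * G * S = G * (F * S) := by ring
    _ = G := by rw [hFS, mul_one]
  have hco := congrArg (PowerSeries.coeff n) key
  rw [PowerSeries.coeff_mul] at hco
  simp only [hS, hG, PowerSeries.coeff_mk] at hco
  exact hco

def g1 (a : ℕ) : ℕ := (a+1)*(3*a+2)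
def g2 (a : ℕ) : ℕ := (a+1)*(3*a+4)

theorem s2Z_eval (n m : ℕ) : s2Z ((n:ℤ) - (m:ℤ)) = if m ≤ n then (s2 (n - m) : ℤ) else 0 := by
  by_cases h : m ≤ n
  · rw [if_pos h, s2Z, if_pos (by omega : (0:ℤ) ≤ (n:ℤ)-(m:ℤ))]
    have e : ((n:ℤ)-(m:ℤ)).toNat = n - m := by omega
    rw [e]
  · rw [if_neg h, s2Z, if_neg (by omega : ¬ (0:ℤ) ≤ (n:ℤ)-(m:ℤ))]

theorem g1_inj : Function.Injective g1 := by
  intro a b h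
  rw [g1, g1] at h
  have hZ : ((a:ℤ)+1)*(3*(a:ℤ)+2) = ((b:ℤ)+1)*(3*(b:ℤ)+2) := by exact_mod_cast h
  have := pentInjZ (a := (a:ℤ)+1) (b := (b:ℤ)+1) (by linear_combination hZ)
  omega

theorem g2_inj : Function.Injective g2 := by
  intro a b h
  rw [g2, g2] at h
  have hZ : ((a:ℤ)+1)*(3*(a:ℤ)+4) = ((b:ℤ)+1)*(3*(b:ℤ)+4) := by exact_mod_cast h
  have := pentInjZ (a := -((a:ℤ)+1)) (b := -((b:ℤ)+1)) (by linear_combination hZ)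
  omega

theorem g1_ne_g2 (a b : ℕ) : g1 a ≠ g2 b := by
  intro h
  rw [g1, g2] at h
  have hZ : ((a:ℤ)+1)*(3*(a:ℤ)+2) = ((b:ℤ)+1)*(3*(b:ℤ)+4) := by exact_mod_cast h
  have := pentInjZ (a := (a:ℤ)+1) (b := -((b:ℤ)+1)) (by linear_combination hZ)
  omega

theorem E2_g1 (a : ℕ) : E (2 ∣ ·) (g1 a) = (-1:ℤ)^(a+1) := by
  rw [E_P2_pent (g1 a) ((a:ℤ)+1) (by rw [g1]; push_cast; ring)]
  rcases Nat.even_or_odd (a+1) with he | ho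
  · rw [if_pos (by exact_mod_cast (Int.even_coe_nat (a+1)).2 he), Even.neg_one_pow he]
  · rw [if_neg (by
      rw [Int.not_even_iff_odd]
      exact_mod_cast (Int.odd_coe_nat (a+1)).2 ho), Odd.neg_one_pow ho]

theorem E2_g2 (a : ℕ) : E (2 ∣ ·) (g2 a) = (-1:ℤ)^(a+1) := by
  rw [E_P2_pent (g2 a) (-((a:ℤ)+1)) (by rw [g2]; push_cast; ring)]
  have hev : (if Even (-((a:ℤ)+1)) then (1:ℤ) else -1) = (if Even ((a:ℤ)+1) then (1:ℤ) else -1) := by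
    by_cases h : Even ((a:ℤ)+1)
    · rw [if_pos (even_neg.2 h), if_pos h]
    · rw [if_neg (fun hc => h (even_neg.1 hc)), if_neg h]
  rw [hev]
  rcases Nat.even_or_odd (a+1) with he | ho
  · rw [if_pos (by exact_mod_cast (Int.even_coe_nat (a+1)).2 he), Even.neg_one_pow he]
  · rw [if_neg (by
      rw [Int.not_even_iff_odd]
      exact_mod_cast (Int.odd_coe_nat (a+1)).2 ho), Odd.neg_one_pow ho]

theorem E2_zero : E (2 ∣ ·) 0 = 1 := by
  rw [E_P2_pent 0 0 (by norm_num)]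
  norm_num

theorem master (n : ℕ) :
    (s2 n : ℤ) + ∑' j' : ℕ, (-1 : ℤ) ^ (j' + 1) *
        (s2Z ((n : ℤ) - ((j' : ℤ) + 1) * (3 * ((j' : ℤ) + 1) - 1)) +
          s2Z ((n : ℤ) - ((j' : ℤ) + 1) * (3 * ((j' : ℤ) + 1) + 1))) = E (6 ∣ ·) n := by
  classical
  have hg1 : ∀ a : ℕ, (n : ℤ) - ((a : ℤ) + 1) * (3 * ((a : ℤ) + 1) - 1) = (n:ℤ) - (g1 a : ℤ) := by
    intro a; rw [g1]; push_cast; ring_nf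
  have hg2 : ∀ a : ℕ, (n : ℤ) - ((a : ℤ) + 1) * (3 * ((a : ℤ) + 1) + 1) = (n:ℤ) - (g2 a : ℤ) := by
    intro a; rw [g2]; push_cast; ring_nf
  have hg1lb : ∀ a : ℕ, a < g1 a := by intro a; rw [g1]; nlinarith
  have hg2lb : ∀ a : ℕ, a < g2 a := by intro a; rw [g2]; nlinarith
  -- finite sum
  have htsum : ∑' j' : ℕ, (-1 : ℤ) ^ (j' + 1) *
        (s2Z ((n : ℤ) - ((j' : ℤ) + 1) * (3 * ((j' : ℤ) + 1) - 1)) +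
          s2Z ((n : ℤ) - ((j' : ℤ) + 1) * (3 * ((j' : ℤ) + 1) + 1))) =
      ∑ a ∈ range (n+1), (-1 : ℤ) ^ (a + 1) *
        (s2Z ((n : ℤ) - (g1 a : ℤ)) + s2Z ((n : ℤ) - (g2 a : ℤ))) := by
    rw [tsum_eq_sum (s := range (n+1))]
    · apply Finset.sum_congr rfl
      intro a _
      rw [hg1 a, hg2 a]
    · intro b hb
      rw [Finset.mem_range] at hb
      rw [hg1 b, hg2 b, s2Z_eval, s2Z_eval, if_neg (by have := hg1lb b; omega),
        if_neg (by have := hg2lb b; omega)]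
      ring
  rw [htsum]
  -- rewrite terms with s2Z_eval and split
  have hsplit : ∑ a ∈ range (n+1), (-1 : ℤ) ^ (a + 1) *
        (s2Z ((n : ℤ) - (g1 a : ℤ)) + s2Z ((n : ℤ) - (g2 a : ℤ))) =
      (∑ a ∈ (range (n+1)).filter (fun a => g1 a ≤ n), (-1:ℤ)^(a+1) * (s2 (n - g1 a) : ℤ)) +
      (∑ a ∈ (range (n+1)).filter (fun a => g2 a ≤ n), (-1:ℤ)^(a+1) * (s2 (n - g2 a) : ℤ)) := by
    have e : ∀ a ∈ range (n+1), (-1 : ℤ) ^ (a + 1) *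
        (s2Z ((n : ℤ) - (g1 a : ℤ)) + s2Z ((n : ℤ) - (g2 a : ℤ))) =
        (-1:ℤ)^(a+1) * s2Z ((n : ℤ) - (g1 a : ℤ)) + (-1:ℤ)^(a+1) * s2Z ((n : ℤ) - (g2 a : ℤ)) := by
      intro a _; ring
    rw [Finset.sum_congr rfl e, Finset.sum_add_distrib]
    congr 1
    · rw [← Finset.sum_filter_add_sum_filter_not (range (n+1)) (fun a => g1 a ≤ n)]
      have z : ∑ a ∈ (range (n+1)).filter (fun a => ¬ g1 a ≤ n),
          (-1:ℤ)^(a+1) * s2Z ((n : ℤ) - (g1 a : ℤ)) = 0 := by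
        apply Finset.sum_eq_zero
        intro a ha
        rw [Finset.mem_filter] at ha
        rw [s2Z_eval, if_neg ha.2, mul_zero]
      rw [z, add_zero]
      apply Finset.sum_congr rfl
      intro a ha
      rw [Finset.mem_filter] at ha
      rw [s2Z_eval, if_pos ha.2]
    · rw [← Finset.sum_filter_add_sum_filter_not (range (n+1)) (fun a => g2 a ≤ n)]
      have z : ∑ a ∈ (range (n+1)).filter (fun a => ¬ g2 a ≤ n),
          (-1:ℤ)^(a+1) * s2Z ((n : ℤ) - (g2 a : ℤ)) = 0 := by
        apply Finset.sum_eq_zero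
        intro a ha
        rw [Finset.mem_filter] at ha
        rw [s2Z_eval, if_neg ha.2, mul_zero]
      rw [z, add_zero]
      apply Finset.sum_congr rfl
      intro a ha
      rw [Finset.mem_filter] at ha
      rw [s2Z_eval, if_pos ha.2]
  rw [hsplit, ← conv_id n, Finset.Nat.sum_antidiagonal_eq_sum_range_succ_mk]
  -- now reduce the RHS convolution sum to the support
  set J1 := (range (n+1)).filter (fun a => g1 a ≤ n) with hJ1
  set J2 := (range (n+1)).filter (fun a => g2 a ≤ n) with hJ2
  set S1 := J1.image g1 with hS1
  set S2 := J2.image g2 with hS2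
  have hsub : insert 0 (S1 ∪ S2) ⊆ range (n+1) := by
    intro k hk
    rcases Finset.mem_insert.1 hk with rfl | hk
    · simp
    · rcases Finset.mem_union.1 hk with hk | hk <;>
      · obtain ⟨a, ha, rfl⟩ := Finset.mem_image.1 hk
        rw [Finset.mem_filter] at ha
        rw [Finset.mem_range]
        omega
  have hvanish : ∀ k ∈ range (n+1), k ∉ insert 0 (S1 ∪ S2) →
      E (2 ∣ ·) k * ((s2 (n - k) : ℕ) : ℤ) = 0 := by
    intro k hk hknot
    rw [Finset.mem_range] at hk
    have hk0 : k ≠ 0 := fun h => hknot (by rw [h]; exact Finset.mem_insert_self 0 _)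
    have : E (2 ∣ ·) k = 0 := by
      apply E_P2_zero
      rintro ⟨j, hj⟩
      rcases lt_trichotomy j 0 with hneg | rfl | hposj
      · set a := (-j - 1).toNat with ha
        have hja : j = -((a:ℤ)+1) := by omega
        have hk2 : k = g2 a := by
          rw [g2]
          have : (k:ℤ) = ((a:ℤ)+1)*(3*(a:ℤ)+4) := by rw [hj, hja]; ring
          exact_mod_cast this
        apply hknot
        refine Finset.mem_insert_of_mem (Finset.mem_union_right _ (Finset.mem_image.2 ⟨a, ?_, hk2.symm⟩))
        rw [Finset.mem_filter, Finset.mem_range]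
        have := hg2lb a
        omega
      · simp at hj; omega
      · set a := (j - 1).toNat with ha
        have hja : j = (a:ℤ)+1 := by omega
        have hk1 : k = g1 a := by
          rw [g1]
          have : (k:ℤ) = ((a:ℤ)+1)*(3*(a:ℤ)+2) := by rw [hj, hja]; ring
          exact_mod_cast this
        apply hknot
        refine Finset.mem_insert_of_mem (Finset.mem_union_left _ (Finset.mem_image.2 ⟨a, ?_, hk1.symm⟩))
        rw [Finset.mem_filter, Finset.mem_range]
        have := hg1lb a
        omega
    rw [this, zero_mul]
  rw [← Finset.sum_subset hsub hvanish]
  have h0notin : (0:ℕ) ∉ S1 ∪ S2 := by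
    intro h
    rcases Finset.mem_union.1 h with h | h <;>
    · obtain ⟨a, _, hfa⟩ := Finset.mem_image.1 h
      first
        | (have := hg1lb a; omega)
        | (have := hg2lb a; omega)
  have hdisjS : Disjoint S1 S2 := by
    rw [Finset.disjoint_left]
    intro k hk1 hk2
    obtain ⟨a, _, ha⟩ := Finset.mem_image.1 hk1
    obtain ⟨b, _, hb⟩ := Finset.mem_image.1 hk2
    exact g1_ne_g2 a b (by rw [ha, hb])
  rw [Finset.sum_insert h0notin, Finset.sum_union hdisjS]
  rw [Finset.sum_image (fun a _ b _ h => g1_inj h), Finset.sum_image (fun a _ b _ h => g2_inj h)]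
  have e0 : E (2 ∣ ·) 0 * ((s2 (n - 0) : ℕ) : ℤ) = (s2 n : ℤ) := by
    rw [E2_zero, Nat.sub_zero, one_mul]
  rw [e0]
  have e1 : ∀ a ∈ J1, E (2 ∣ ·) (g1 a) * ((s2 (n - g1 a) : ℕ) : ℤ) =
      (-1:ℤ)^(a+1) * (s2 (n - g1 a) : ℤ) := by
    intro a _; rw [E2_g1]
  have e2 : ∀ a ∈ J2, E (2 ∣ ·) (g2 a) * ((s2 (n - g2 a) : ℕ) : ℤ) =
      (-1:ℤ)^(a+1) * (s2 (n - g2 a) : ℤ) := by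
    intro a _; rw [E2_g2]
  rw [Finset.sum_congr rfl e1, Finset.sum_congr rfl e2]

end PNT12

/-- For every `n ≥ 0`,
`s₂(n) + ∑_{j ≥ 1} (-1)^j [s₂(n - j(3j-1)) + s₂(n - j(3j+1))]`
equals `(-1)^j` if `n = 6·j(3j-1)/2 = 3j(3j-1)` for some `j ∈ ℤ`, and `0` otherwise. -/
theorem stmt12 (n : ℕ) :
    (∀ j : ℤ, (n : ℤ) = 3 * (j * (3 * j - 1)) →
      (s2 n : ℤ) +
        ∑' j' : ℕ, (-1 : ℤ) ^ (j' + 1) *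
          (s2Z ((n : ℤ) - ((j' : ℤ) + 1) * (3 * ((j' : ℤ) + 1) - 1)) +
            s2Z ((n : ℤ) - ((j' : ℤ) + 1) * (3 * ((j' : ℤ) + 1) + 1))) =
        (if Even j then 1 else -1)) ∧
    ((¬ ∃ j : ℤ, (n : ℤ) = 3 * (j * (3 * j - 1))) →
      (s2 n : ℤ) +
        ∑' j' : ℕ, (-1 : ℤ) ^ (j' + 1) *
          (s2Z ((n : ℤ) - ((j' : ℤ) + 1) * (3 * ((j' : ℤ) + 1) - 1)) +
            s2Z ((n : ℤ) - ((j' : ℤ) + 1) * (3 * ((j' : ℤ) + 1) + 1))) =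
        0) := by
  constructor
  · intro j hj
    rw [PNT12.master n]
    exact PNT12.E_P6_pent n j hj
  · intro h
    rw [PNT12.master n]
    exact PNT12.E_P6_zero n h
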